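/- On ℝ⁶ with coordinates (x₁,…,x₆) = (γ₁,γ₂,γ₃,M₁,M₂,M₃), let T₁ be the constant trivector with components T₁^{abc} = ∑_{i,j,k=1}^{3} ε_{ijk} (∂_i ∧ ∂_j ∧ ∂_{k+3})^{abc}, where for standard basis vectors u,v,w the wedge component is (u∧v∧w)^{abc} = u_a(v_bw_c − v_cw_b) − u_b(v_aw_c − v_cw_a) + u_c(v_aw_b − v_bw_a). Then for the Lagrange vector field X = (2(γ₃M₂−γ₂M₃), 2(γ₁M₃−γ₃M₁), 2(γ₂M₁−γ₁M₂), −aγ₂, aγ₁, 0), the first integrals f₁ = γ₁²+γ₂²+γ₃² and f₃ = M₁²+M₂²+M₃²+aγ₃, and the antisymmetric matrix field P₁ with upper entries (1,2) ↦ −M₃, (1,3) ↦ M₂, (1,5) ↦ −a/2, (2,3) ↦ −M₁, (2,4) ↦ a/2 (others 0): (a) ∑_{b,c=1}^{6} T₁^{abc} (∂f₁/∂x_b)(∂f₃/∂x_c) = −4 X_a for every a and every point; (b) ∑_{c=1}^{6} T₁^{abc} ∂f₃/∂x_c = −4 (P₁)_{ab} for all a,b; (c) the conditional invariance ∑_{c=1}^{6}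 (L_X T₁)^{abc} ∂f₃/∂x_c = 0 holds for all a,b, where (L_X T₁)^{abc} = −∑_ℓ ( (∂X_a/∂x_ℓ) T₁^{ℓbc} + (∂X_b/∂x_ℓ) T₁^{aℓc} + (∂X_c/∂x_ℓ) T₁^{abℓ} ). -/

import Mathlib

noncomputable section

open scoped BigOperators

/-- Partial derivative of `f` in the `i`-th coordinate direction at `x`. -/
def pd {n : ℕ} (i : Fin n) (f : (Fin n → ℝ) → ℝ) (x : Fin n → ℝ) : ℝ :=
  fderiv ℝ f x (Pi.single i 1)

/-- The Lagrange vector field on `ℝ⁶` with coordinates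
`(x₁,…,x₆) = (γ₁,γ₂,γ₃,M₁,M₂,M₃)`. -/
def lagX (a : ℝ) (x : Fin 6 → ℝ) : Fin 6 → ℝ :=
  ![2 * (x 2 * x 4 - x 1 * x 5), 2 * (x 0 * x 5 - x 2 * x 3),
    2 * (x 1 * x 3 - x 0 * x 4), -(a * x 1), a * x 0, 0]

/-- `f₁ = γ₁² + γ₂² + γ₃²`. -/
def lagF₁ (x : Fin 6 → ℝ) : ℝ := x 0 ^ 2 + x 1 ^ 2 + x 2 ^ 2

/-- `f₂ = γ₁M₁ + γ₂M₂ + γ₃M₃`. -/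
def lagF₂ (x : Fin 6 → ℝ) : ℝ := x 0 * x 3 + x 1 * x 4 + x 2 * x 5

/-- `f₃ = M₁² + M₂² + M₃² + aγ₃`. -/
def lagF₃ (a : ℝ) (x : Fin 6 → ℝ) : ℝ := x 3 ^ 2 + x 4 ^ 2 + x 5 ^ 2 + a * x 2

/-- `f₄ = M₃`. -/
def lagF₄ (x : Fin 6 → ℝ) : ℝ := x 5

/-- Contraction of a matrix field with the gradient of a function:
`(P∇f)_i = ∑_j P_{ij} ∂f/∂x_j`. -/
def Pgrad {n : ℕ} (P : (Fin n → ℝ) → Matrix (Fin n) (Fin n) ℝ)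
    (f : (Fin n → ℝ) → ℝ) (x : Fin n → ℝ) (i : Fin n) : ℝ :=
  ∑ j, P x i j * pd j f x

/-- Lie derivative of a (2,0) tensor (matrix field) `P` along the vector field `X`:
`(L_X P)_{ij} = ∑_k (X_k ∂P_{ij}/∂x_k − P_{kj} ∂X_i/∂x_k − P_{ik} ∂X_j/∂x_k)`. -/
def matLie {n : ℕ} (X : (Fin n → ℝ) → Fin n → ℝ)
    (P : (Fin n → ℝ) → Matrix (Fin n) (Fin n) ℝ) (x : Fin n → ℝ) (i j : Fin n) : ℝ :=
  ∑ k, (X x k * pd k (fun y => P y i j) x - P x k j * pd k (fun y => X y i) x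
        - P x i k * pd k (fun y => X y j) x)

/-- The Jacobiator of an antisymmetric matrix field; it vanishes identically iff `P`
satisfies the Jacobi identity (i.e. is a Poisson bivector). -/
def jacobiator {n : ℕ} (P : (Fin n → ℝ) → Matrix (Fin n) (Fin n) ℝ)
    (x : Fin n → ℝ) (i j k : Fin n) : ℝ :=
  ∑ l, (P x l i * pd l (fun y => P y j k) x + P x l j * pd l (fun y => P y k i) x
        + P x l k * pd l (fun y => P y i j) x)

/-- The Levi-Civita symbol on three indices, `ε₀₁₂ = 1` (0-based). -/
def eps (i j k : Fin 3) : ℝ :=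
  (((j : ℕ) : ℝ) - ((i : ℕ) : ℝ)) * (((k : ℕ) : ℝ) - ((j : ℕ) : ℝ)) *
    (((k : ℕ) : ℝ) - ((i : ℕ) : ℝ)) / 2

/-- Components of the wedge product of three vectors:
`(u∧v∧w)^{abc} = u_a(v_bw_c − v_cw_b) − u_b(v_aw_c − v_cw_a) + u_c(v_aw_b − v_bw_a)`. -/
def wedge3 (u v w : Fin 6 → ℝ) (a b c : Fin 6) : ℝ :=
  u a * (v b * w c - v c * w b) - u b * (v a * w c - v c * w a)
    + u c * (v a * w b - v b * w a)

/-- The `i`-th standard basis vector `∂_i` of `ℝ⁶`. -/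
def e6 (i : Fin 6) : Fin 6 → ℝ := fun j => if j = i then 1 else 0

/-- Embedding of an index `i ∈ {1,2,3}` as the index of `∂_i` in `ℝ⁶`. -/
def lo (i : Fin 3) : Fin 6 := ⟨(i : ℕ), by have := i.isLt; omega⟩

/-- Embedding of an index `i ∈ {1,2,3}` as the index of `∂_{i+3}` in `ℝ⁶`. -/
def hi (i : Fin 3) : Fin 6 := ⟨(i : ℕ) + 3, by have := i.isLt; omega⟩

/-- Lie derivative along `X` of a trivector `T` with constant components:
`(L_X T)^{abc} = −∑_ℓ ((∂X_a/∂x_ℓ)T^{ℓbc} + (∂X_b/∂x_ℓ)T^{aℓc} + (∂X_c/∂x_ℓ)T^{abℓ})`. -/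
def triLie (X : (Fin 6 → ℝ) → Fin 6 → ℝ) (T : Fin 6 → Fin 6 → Fin 6 → ℝ)
    (x : Fin 6 → ℝ) (a b c : Fin 6) : ℝ :=
  -∑ l, (pd l (fun y => X y a) x * T l b c + pd l (fun y => X y b) x * T a l c
        + pd l (fun y => X y c) x * T a b l)

/-- The constant trivector `T₁ = ∑_{i,j,k} ε_{ijk} ∂_i ∧ ∂_j ∧ ∂_{k+3}`. -/
def lagT₁ (a b c : Fin 6) : ℝ :=
  ∑ i : Fin 3, ∑ j : Fin 3, ∑ k : Fin 3,
    eps i j k * wedge3 (e6 (lo i)) (e6 (lo j)) (e6 (hi k)) a b c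

/-- The invariant Poisson bivector `P₁` of the Lagrange case. -/
def lagP₁ (a : ℝ) (x : Fin 6 → ℝ) : Matrix (Fin 6) (Fin 6) ℝ :=
  !![0, -(x 5), x 4, 0, -(a / 2), 0;
     x 5, 0, -(x 3), a / 2, 0, 0;
     -(x 4), x 3, 0, 0, 0, 0;
     0, -(a / 2), 0, 0, 0, 0;
     a / 2, 0, 0, 0, 0, 0;
     0, 0, 0, 0, 0, 0]


namespace LagAux

def tbl : Fin 6 → Fin 6 → Fin 6 → ℝ :=
  ![
  ![![(0:ℝ), (0:ℝ), (0:ℝ), (0:ℝ), (0:ℝ), (0:ℝ)],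
    ![(0:ℝ), (0:ℝ), (0:ℝ), (0:ℝ), (0:ℝ), (2:ℝ)],
    ![(0:ℝ), (0:ℝ), (0:ℝ), (0:ℝ), (-2:ℝ), (0:ℝ)],
    ![(0:ℝ), (0:ℝ), (0:ℝ), (0:ℝ), (0:ℝ), (0:ℝ)],
    ![(0:ℝ), (0:ℝ), (2:ℝ), (0:ℝ), (0:ℝ), (0:ℝ)],
    ![(0:ℝ), (-2:ℝ), (0:ℝ), (0:ℝ), (0:ℝ), (0:ℝ)]],
  ![![(0:ℝ), (0:ℝ), (0:ℝ), (0:ℝ), (0:ℝ), (-2:ℝ)],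
    ![(0:ℝ), (0:ℝ), (0:ℝ), (0:ℝ), (0:ℝ), (0:ℝ)],
    ![(0:ℝ), (0:ℝ), (0:ℝ), (2:ℝ), (0:ℝ), (0:ℝ)],
    ![(0:ℝ), (0:ℝ), (-2:ℝ), (0:ℝ), (0:ℝ), (0:ℝ)],
    ![(0:ℝ), (0:ℝ), (0:ℝ), (0:ℝ), (0:ℝ), (0:ℝ)],
    ![(2:ℝ), (0:ℝ), (0:ℝ), (0:ℝ), (0:ℝ), (0:ℝ)]],
  ![![(0:ℝ), (0:ℝ), (0:ℝ), (0:ℝ), (2:ℝ), (0:ℝ)],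
    ![(0:ℝ), (0:ℝ), (0:ℝ), (-2:ℝ), (0:ℝ), (0:ℝ)],
    ![(0:ℝ), (0:ℝ), (0:ℝ), (0:ℝ), (0:ℝ), (0:ℝ)],
    ![(0:ℝ), (2:ℝ), (0:ℝ), (0:ℝ), (0:ℝ), (0:ℝ)],
    ![(-2:ℝ), (0:ℝ), (0:ℝ), (0:ℝ), (0:ℝ), (0:ℝ)],
    ![(0:ℝ), (0:ℝ), (0:ℝ), (0:ℝ), (0:ℝ), (0:ℝ)]],
  ![![(0:ℝ), (0:ℝ), (0:ℝ), (0:ℝ), (0:ℝ), (0:ℝ)],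
    ![(0:ℝ), (0:ℝ), (2:ℝ), (0:ℝ), (0:ℝ), (0:ℝ)],
    ![(0:ℝ), (-2:ℝ), (0:ℝ), (0:ℝ), (0:ℝ), (0:ℝ)],
    ![(0:ℝ), (0:ℝ), (0:ℝ), (0:ℝ), (0:ℝ), (0:ℝ)],
    ![(0:ℝ), (0:ℝ), (0:ℝ), (0:ℝ), (0:ℝ), (0:ℝ)],
    ![(0:ℝ), (0:ℝ), (0:ℝ), (0:ℝ), (0:ℝ), (0:ℝ)]],
  ![![(0:ℝ), (0:ℝ), (-2:ℝ), (0:ℝ), (0:ℝ), (0:ℝ)],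
    ![(0:ℝ), (0:ℝ), (0:ℝ), (0:ℝ), (0:ℝ), (0:ℝ)],
    ![(2:ℝ), (0:ℝ), (0:ℝ), (0:ℝ), (0:ℝ), (0:ℝ)],
    ![(0:ℝ), (0:ℝ), (0:ℝ), (0:ℝ), (0:ℝ), (0:ℝ)],
    ![(0:ℝ), (0:ℝ), (0:ℝ), (0:ℝ), (0:ℝ), (0:ℝ)],
    ![(0:ℝ), (0:ℝ), (0:ℝ), (0:ℝ), (0:ℝ), (0:ℝ)]],
  ![![(0:ℝ), (2:ℝ), (0:ℝ), (0:ℝ), (0:ℝ), (0:ℝ)],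
    ![(-2:ℝ), (0:ℝ), (0:ℝ), (0:ℝ), (0:ℝ), (0:ℝ)],
    ![(0:ℝ), (0:ℝ), (0:ℝ), (0:ℝ), (0:ℝ), (0:ℝ)],
    ![(0:ℝ), (0:ℝ), (0:ℝ), (0:ℝ), (0:ℝ), (0:ℝ)],
    ![(0:ℝ), (0:ℝ), (0:ℝ), (0:ℝ), (0:ℝ), (0:ℝ)],
    ![(0:ℝ), (0:ℝ), (0:ℝ), (0:ℝ), (0:ℝ), (0:ℝ)]]]


@[simp] lemma consv_5_1 {α : Type*} (x : α) (u : Fin 5 → α) : Matrix.vecCons x u 1 = u 0 := rfl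
@[simp] lemma consv_5_2 {α : Type*} (x : α) (u : Fin 5 → α) : Matrix.vecCons x u 2 = u 1 := rfl
@[simp] lemma consv_5_3 {α : Type*} (x : α) (u : Fin 5 → α) : Matrix.vecCons x u 3 = u 2 := rfl
@[simp] lemma consv_5_4 {α : Type*} (x : α) (u : Fin 5 → α) : Matrix.vecCons x u 4 = u 3 := rfl
@[simp] lemma consv_5_5 {α : Type*} (x : α) (u : Fin 5 → α) : Matrix.vecCons x u 5 = u 4 := rfl
@[simp] lemma consv_4_1 {α : Type*} (x : α) (u : Fin 4 → α) : Matrix.vecCons x u 1 = u 0 := rfl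
@[simp] lemma consv_4_2 {α : Type*} (x : α) (u : Fin 4 → α) : Matrix.vecCons x u 2 = u 1 := rfl
@[simp] lemma consv_4_3 {α : Type*} (x : α) (u : Fin 4 → α) : Matrix.vecCons x u 3 = u 2 := rfl
@[simp] lemma consv_4_4 {α : Type*} (x : α) (u : Fin 4 → α) : Matrix.vecCons x u 4 = u 3 := rfl
@[simp] lemma consv_3_1 {α : Type*} (x : α) (u : Fin 3 → α) : Matrix.vecCons x u 1 = u 0 := rfl
@[simp] lemma consv_3_2 {α : Type*} (x : α) (u : Fin 3 → α) : Matrix.vecCons x u 2 = u 1 := rfl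
@[simp] lemma consv_3_3 {α : Type*} (x : α) (u : Fin 3 → α) : Matrix.vecCons x u 3 = u 2 := rfl
@[simp] lemma consv_2_1 {α : Type*} (x : α) (u : Fin 2 → α) : Matrix.vecCons x u 1 = u 0 := rfl
@[simp] lemma consv_2_2 {α : Type*} (x : α) (u : Fin 2 → α) : Matrix.vecCons x u 2 = u 1 := rfl
@[simp] lemma consv_1_1 {α : Type*} (x : α) (u : Fin 1 → α) : Matrix.vecCons x u 1 = u 0 := rfl

abbrev prj (i : Fin 6) : (Fin 6 → ℝ) →L[ℝ] ℝ :=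
  ContinuousLinearMap.proj (R := ℝ) (φ := fun _ : Fin 6 => ℝ) i

lemma hc (i : Fin 6) (x : Fin 6 → ℝ) : HasFDerivAt (fun y : Fin 6 → ℝ => y i)
    (prj i) x := (prj i).hasFDerivAt

@[simp] lemma fmk0 (h : 0 < 6) : (⟨0, h⟩ : Fin 6) = 0 := rfl
@[simp] lemma fmk1 (h : 1 < 6) : (⟨1, h⟩ : Fin 6) = 1 := rfl
@[simp] lemma fmk2 (h : 2 < 6) : (⟨2, h⟩ : Fin 6) = 2 := rfl
@[simp] lemma fmk3 (h : 3 < 6) : (⟨3, h⟩ : Fin 6) = 3 := rfl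
@[simp] lemma fmk4 (h : 4 < 6) : (⟨4, h⟩ : Fin 6) = 4 := rfl
@[simp] lemma fmk5 (h : 5 < 6) : (⟨5, h⟩ : Fin 6) = 5 := rfl

lemma lagT1_expand (a b c : Fin 6) : lagT₁ a b c =
    wedge3 (e6 0) (e6 1) (e6 5) a b c + wedge3 (e6 1) (e6 2) (e6 3) a b c
      + wedge3 (e6 2) (e6 0) (e6 4) a b c - wedge3 (e6 0) (e6 2) (e6 4) a b c
      - wedge3 (e6 2) (e6 1) (e6 3) a b c - wedge3 (e6 1) (e6 0) (e6 5) a b c := by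
  simp only [lagT₁, Fin.sum_univ_three]
  norm_num [eps, lo, hi, Fin.ext_iff]
  ring

set_option maxHeartbeats 1000000 in
lemma lagT1_eq0 (j k : Fin 6) : lagT₁ 0 j k = tbl 0 j k := by
  fin_cases j <;> fin_cases k <;>
    simp (config := { decide := true }) [lagT1_expand, wedge3, e6, tbl, Matrix.vecHead, Matrix.vecTail, Function.comp] <;> norm_num

set_option maxHeartbeats 1000000 in
lemma lagT1_eq1 (j k : Fin 6) : lagT₁ 1 j k = tbl 1 j k := by
  fin_cases j <;> fin_cases k <;>
    simp (config := { decide := true }) [lagT1_expand, wedge3, e6, tbl, Matrix.vecHead, Matrix.vecTail, Function.comp] <;> norm_num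

set_option maxHeartbeats 1000000 in
lemma lagT1_eq2 (j k : Fin 6) : lagT₁ 2 j k = tbl 2 j k := by
  fin_cases j <;> fin_cases k <;>
    simp (config := { decide := true }) [lagT1_expand, wedge3, e6, tbl, Matrix.vecHead, Matrix.vecTail, Function.comp] <;> norm_num

set_option maxHeartbeats 1000000 in
lemma lagT1_eq3 (j k : Fin 6) : lagT₁ 3 j k = tbl 3 j k := by
  fin_cases j <;> fin_cases k <;>
    simp (config := { decide := true }) [lagT1_expand, wedge3, e6, tbl, Matrix.vecHead, Matrix.vecTail, Function.comp] <;> norm_num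

set_option maxHeartbeats 1000000 in
lemma lagT1_eq4 (j k : Fin 6) : lagT₁ 4 j k = tbl 4 j k := by
  fin_cases j <;> fin_cases k <;>
    simp (config := { decide := true }) [lagT1_expand, wedge3, e6, tbl, Matrix.vecHead, Matrix.vecTail, Function.comp] <;> norm_num

set_option maxHeartbeats 1000000 in
lemma lagT1_eq5 (j k : Fin 6) : lagT₁ 5 j k = tbl 5 j k := by
  fin_cases j <;> fin_cases k <;>
    simp (config := { decide := true }) [lagT1_expand, wedge3, e6, tbl, Matrix.vecHead, Matrix.vecTail, Function.comp] <;> norm_num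

lemma lagT1_eq (i j k : Fin 6) : lagT₁ i j k = tbl i j k := by
  fin_cases i
  exacts [lagT1_eq0 j k, lagT1_eq1 j k, lagT1_eq2 j k, lagT1_eq3 j k,
    lagT1_eq4 j k, lagT1_eq5 j k]

lemma pdF1 (x : Fin 6 → ℝ) (j : Fin 6) :
    pd j lagF₁ x = ![2*x 0, 2*x 1, 2*x 2, (0:ℝ), 0, 0] j := by
  rw [pd, show lagF₁ = fun y : Fin 6 → ℝ => y 0 * y 0 + y 1 * y 1 + y 2 * y 2 from
    funext fun y => by simp [lagF₁]; ring]
  have h : HasFDerivAt (fun y : Fin 6 → ℝ => y 0 * y 0 + y 1 * y 1 + y 2 * y 2) _ x := (((hc 0 x).mul (hc 0 x)).add ((hc 1 x).mul (hc 1 x))).add ((hc 2 x).mul (hc 2 x))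
  rw [h.fderiv]
  fin_cases j <;> simp [Pi.single_apply] <;> ring

lemma pdF3 (a : ℝ) (x : Fin 6 → ℝ) (j : Fin 6) :
    pd j (lagF₃ a) x = ![(0:ℝ), 0, a, 2*x 3, 2*x 4, 2*x 5] j := by
  rw [pd, show lagF₃ a = fun y : Fin 6 → ℝ => y 3 * y 3 + y 4 * y 4 + y 5 * y 5 + a * y 2 from
    funext fun y => by simp [lagF₃]; ring]
  have h : HasFDerivAt (fun y : Fin 6 → ℝ => y 3 * y 3 + y 4 * y 4 + y 5 * y 5 + a * y 2) _ x := ((((hc 3 x).mul (hc 3 x)).add ((hc 4 x).mul (hc 4 x))).add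
    ((hc 5 x).mul (hc 5 x))).add ((hc 2 x).const_mul a)
  rw [h.fderiv]
  fin_cases j <;> simp [Pi.single_apply] <;> ring

def XJ (a : ℝ) (x : Fin 6 → ℝ) : Fin 6 → Fin 6 → ℝ :=
  ![![0, -2*x 5, 2*x 4, 0, 2*x 2, -2*x 1],
    ![2*x 5, 0, -2*x 3, -2*x 2, 0, 2*x 0],
    ![-2*x 4, 2*x 3, 0, 2*x 1, -2*x 0, 0],
    ![0, -a, 0, 0, 0, 0],
    ![a, 0, 0, 0, 0, 0],
    ![0, 0, 0, 0, 0, 0]]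

lemma pdX0 (a : ℝ) (x : Fin 6 → ℝ) (j : Fin 6) :
    pd j (fun y => lagX a y 0) x = XJ a x 0 j := by
  rw [show (fun y : Fin 6 → ℝ => lagX a y 0) = fun y => 2 * (y 2 * y 4 - y 1 * y 5) from rfl,
    pd, (show HasFDerivAt (fun y : Fin 6 → ℝ => 2 * (y 2 * y 4 - y 1 * y 5)) _ x from
      (((hc 2 x).mul (hc 4 x)).sub ((hc 1 x).mul (hc 5 x))).const_mul 2).fderiv]
  fin_cases j <;> simp [Pi.single_apply, XJ, Matrix.vecHead, Matrix.vecTail, Function.comp] <;> ring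

lemma pdX1 (a : ℝ) (x : Fin 6 → ℝ) (j : Fin 6) :
    pd j (fun y => lagX a y 1) x = XJ a x 1 j := by
  rw [show (fun y : Fin 6 → ℝ => lagX a y 1) = fun y => 2 * (y 0 * y 5 - y 2 * y 3) from rfl,
    pd, (show HasFDerivAt (fun y : Fin 6 → ℝ => 2 * (y 0 * y 5 - y 2 * y 3)) _ x from
      (((hc 0 x).mul (hc 5 x)).sub ((hc 2 x).mul (hc 3 x))).const_mul 2).fderiv]
  fin_cases j <;> simp [Pi.single_apply, XJ, Matrix.vecHead, Matrix.vecTail, Function.comp] <;> ring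

lemma pdX2 (a : ℝ) (x : Fin 6 → ℝ) (j : Fin 6) :
    pd j (fun y => lagX a y 2) x = XJ a x 2 j := by
  rw [show (fun y : Fin 6 → ℝ => lagX a y 2) = fun y => 2 * (y 1 * y 3 - y 0 * y 4) from rfl,
    pd, (show HasFDerivAt (fun y : Fin 6 → ℝ => 2 * (y 1 * y 3 - y 0 * y 4)) _ x from
      (((hc 1 x).mul (hc 3 x)).sub ((hc 0 x).mul (hc 4 x))).const_mul 2).fderiv]
  fin_cases j <;> simp [Pi.single_apply, XJ, Matrix.vecHead, Matrix.vecTail, Function.comp] <;> ring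

lemma pdX3 (a : ℝ) (x : Fin 6 → ℝ) (j : Fin 6) :
    pd j (fun y => lagX a y 3) x = XJ a x 3 j := by
  rw [show (fun y : Fin 6 → ℝ => lagX a y 3) = fun y => -(a * y 1) from rfl,
    pd, (show HasFDerivAt (fun y : Fin 6 → ℝ => -(a * y 1)) _ x from
      ((hc 1 x).const_mul a).neg).fderiv]
  fin_cases j <;> simp [Pi.single_apply, XJ, Matrix.vecHead, Matrix.vecTail, Function.comp]

lemma pdX4 (a : ℝ) (x : Fin 6 → ℝ) (j : Fin 6) :
    pd j (fun y => lagX a y 4) x = XJ a x 4 j := by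
  rw [show (fun y : Fin 6 → ℝ => lagX a y 4) = fun y => a * y 0 from rfl,
    pd, ((hc 0 x).const_mul a).fderiv]
  fin_cases j <;> simp [Pi.single_apply, XJ, Matrix.vecHead, Matrix.vecTail, Function.comp]

lemma pdX5 (a : ℝ) (x : Fin 6 → ℝ) (j : Fin 6) :
    pd j (fun y => lagX a y 5) x = XJ a x 5 j := by
  rw [show (fun y : Fin 6 → ℝ => lagX a y 5) = fun y : Fin 6 → ℝ => (0:ℝ) from rfl,
    pd, (hasFDerivAt_const (0:ℝ) x).fderiv]
  fin_cases j <;> simp [XJ, Matrix.vecHead, Matrix.vecTail, Function.comp]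

lemma pdX (a : ℝ) (x : Fin 6 → ℝ) (i j : Fin 6) :
    pd j (fun y => lagX a y i) x = XJ a x i j := by
  fin_cases i
  exacts [pdX0 a x j, pdX1 a x j, pdX2 a x j, pdX3 a x j, pdX4 a x j, pdX5 a x j]

end LagAux

open LagAux

set_option maxHeartbeats 4000000 in
/-- The conditional numerical invariant `T₁` of the Lagrange case:
(a) `T₁ df₁ df₃ = −4X`; (b) `T₁ df₃ = −4P₁`; (c) `(L_X T₁) df₃ = 0`. -/
theorem lagrange_T1 (a : ℝ) (x : Fin 6 → ℝ) :
    (∀ i : Fin 6, ∑ j, ∑ k, lagT₁ i j k * pd j lagF₁ x * pd k (lagF₃ a) x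
      = -4 * lagX a x i) ∧
    (∀ i j : Fin 6, ∑ k, lagT₁ i j k * pd k (lagF₃ a) x = -4 * lagP₁ a x i j) ∧
    (∀ i j : Fin 6, ∑ k, triLie (lagX a) lagT₁ x i j k * pd k (lagF₃ a) x = 0) := by
  
  refine ⟨?_, ?_, ?_⟩
  · intro i
    simp only [Fin.sum_univ_six, lagT1_eq, pdF1, pdF3]
    fin_cases i <;> simp [tbl, lagX, Matrix.vecHead, Matrix.vecTail, Function.comp] <;> ring
  · intro i j
    simp only [Fin.sum_univ_six, lagT1_eq, pdF3]
    fin_cases i <;> fin_cases j <;> simp [tbl, lagP₁, Matrix.of_apply, Matrix.vecHead, Matrix.vecTail, Function.comp] <;> ring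
  · intro i j
    simp only [triLie, Fin.sum_univ_six, lagT1_eq, pdF3, pdX]
    fin_cases i <;> fin_cases j <;> simp [tbl, XJ, Matrix.vecHead, Matrix.vecTail, Function.comp] <;> ring
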